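/- Let n ≥ 2 be an integer and c > 0. Let G ⊂ ℝ³ be the subgroup generated by v₁ = (2π, 0, 4πc) and v₂ = (−2π/n, −2π, 4π(n−2)c/n). A point (0, 0, λ) ∈ ℝ³ satisfies (0,0,λ) + g ∈ ℝ × 2πℤ × {0} for some g ∈ G if and only if λ ∈ (4c/n)·2π·ℤ when n is even and λ ∈ (2c/n)·2π·ℤ when n is odd. -/

import Mathlib

open Real

theorem central_lambda_condition (n : ℕ) (hn : 2 ≤ n) (c : ℝ) (hc : 0 < c) (lam : ℝ) :
    let v₁ : ℝ × ℝ × ℝ := (2 * π, 0, 4 * π * c)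
    let v₂ : ℝ × ℝ × ℝ := (-(2 * π) / n, -(2 * π), 4 * π * ((n : ℝ) - 2) * c / n)
    let p : ℝ × ℝ × ℝ := (0, 0, lam)
    (∃ x y b : ℤ, (p + x • v₁ + y • v₂).2.1 = 2 * π * b ∧ (p + x • v₁ + y • v₂).2.2 = 0) ↔
      ((Even n → ∃ k : ℤ, lam = 2 * π * (4 * c / n) * k) ∧
       (Odd n → ∃ k : ℤ, lam = 2 * π * (2 * c / n) * k)) := by
  intro v₁ v₂ p
  have hn0 : (n:ℝ) ≠ 0 := Nat.cast_ne_zero.mpr (by omega)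
  have key : ∀ x y : ℤ, (p + x • v₁ + y • v₂).2.2 =
      lam + (4 * π * c / n) * ((n:ℝ) * x + ((n:ℝ) - 2) * y) := by
    intro x y
    simp only [p, v₁, v₂, Prod.snd_add, Prod.smul_mk, zsmul_eq_mul]
    field_simp
    ring
  constructor
  · rintro ⟨x, y, b, -, h2⟩
    rw [key] at h2
    have hlam : lam = - ((4 * π * c / n) * ((n:ℝ) * x + ((n:ℝ) - 2) * y)) := by linarith
    constructor
    · rintro ⟨m, hm⟩
      refine ⟨-((m:ℤ) * x + ((m:ℤ) - 1) * y), ?_⟩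
      have hnm : (n:ℝ) = 2 * m := by rw [hm]; push_cast; ring
      rw [hlam, hnm]
      push_cast
      have hm0 : (m:ℝ) ≠ 0 := by
        intro h; apply hn0; rw [hnm, h]; ring
      field_simp
    · intro _
      refine ⟨-((n:ℤ) * x + ((n:ℤ) - 2) * y), ?_⟩
      rw [hlam]
      push_cast
      field_simp
      ring
  · rintro ⟨he, ho⟩
    rcases Nat.even_or_odd n with hpar | hpar
    · obtain ⟨k, hk⟩ := he hpar
      refine ⟨-k, k, -k, ?_, ?_⟩ <;>
          simp only [p, v₁, v₂, Prod.snd_add, Prod.smul_mk, zsmul_eq_mul, Prod.fst_add]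
      · push_cast; ring
      · rw [hk]; push_cast; field_simp; ring
    · obtain ⟨k, hk⟩ := ho hpar
      obtain ⟨m, hm⟩ := hpar
      have hnm : (n:ℝ) = 2 * m + 1 := by rw [hm]; push_cast; ring
      refine ⟨k * ((m:ℤ) - 1), -(k * m), k * m, ?_, ?_⟩ <;>
          simp only [p, v₁, v₂, Prod.snd_add, Prod.smul_mk, zsmul_eq_mul, Prod.fst_add]
      · push_cast; ring
      · rw [hk, hnm]; push_cast; field_simp; ring
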